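/- Let A be the 2-dimensional commutative associative ℂ-algebra with basis e1, e2 and multiplication e1·e1 = e2, all other products of basis elements being zero. A ℂ-linear bijection φ : A → A is an algebra automorphism of A if and only if there exist ξ ∈ ℂ with ξ ≠ 0 and ν ∈ ℂ such that φ(e1) = ξ·e1 + ν·e2 and φ(e2) = ξ²·e2. -/
import Mathlib


noncomputable section

/-- The 2-dimensional complex vector space. -/
abbrev V2 : Type := Fin 2 → ℂ

/-- The bilinear multiplication on `V2` determined by a table of structure constants:
`c i j` is the product of the `i`-th and `j`-th basis vectors. -/
def tm (c : Fin 2 → Fin 2 → V2) : V2 → V2 → V2 :=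
  fun x y => ∑ i, ∑ j, (x i * y j) • c i j

/-- Multiplication table with the given values of `e1*e1`, `e1*e2`, `e2*e1`, `e2*e2`. -/
def tbl (a b c d : V2) : Fin 2 → Fin 2 → V2 := ![![a, b], ![c, d]]

/-- The zero multiplication on `V2`. -/
def zm : V2 → V2 → V2 := fun _ _ => 0

/-- Isomorphism of algebras with one multiplication: a ℂ-linear bijection preserving
the multiplication. -/
def Iso1 {A : Type*} [AddCommGroup A] [Module ℂ A] {B : Type*} [AddCommGroup B]
    [Module ℂ B] (μ : A → A → A) (ν : B → B → B) : Prop :=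
  ∃ φ : A ≃ₗ[ℂ] B, ∀ x y, φ (μ x y) = ν (φ x) (φ y)

/-- Isomorphism of algebras with two multiplications: a ℂ-linear bijection preserving
both multiplications. -/
def Iso2 {A : Type*} [AddCommGroup A] [Module ℂ A] {B : Type*} [AddCommGroup B]
    [Module ℂ B] (μ₁ μ₂ : A → A → A) (ν₁ ν₂ : B → B → B) : Prop :=
  ∃ φ : A ≃ₗ[ℂ] B,
    (∀ x y, φ (μ₁ x y) = ν₁ (φ x) (φ y)) ∧ (∀ x y, φ (μ₂ x y) = ν₂ (φ x) (φ y))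

/-- The commutative associative algebra A01: `e1·e1 = e1`, `e2·e2 = e2`. -/
def cA01 : Fin 2 → Fin 2 → V2 := tbl ![1,0] 0 0 ![0,1]

/-- The commutative associative algebra A02: `e1·e1 = e1`, `e1·e2 = e2·e1 = e2`. -/
def cA02 : Fin 2 → Fin 2 → V2 := tbl ![1,0] ![0,1] ![0,1] 0

/-- The commutative associative algebra A03: `e1·e1 = e1`. -/
def cA03 : Fin 2 → Fin 2 → V2 := tbl ![1,0] 0 0 0

/-- The commutative associative algebra A04: `e1·e1 = e2`. -/
def cA04 : Fin 2 → Fin 2 → V2 := tbl ![0,1] 0 0 0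


lemma tm_cA04 (x y : V2) : tm cA04 x y = (x 0 * y 0) • (![0,1] : V2) := by
  simp [tm, cA04, tbl, Fin.sum_univ_two]

lemma decomp (x : V2) : x = x 0 • (![1,0] : V2) + x 1 • (![0,1] : V2) := by
  funext i
  fin_cases i <;> simp

theorem statement2' (φ : V2 ≃ₗ[ℂ] V2) :
    (∀ x y : V2, φ (tm cA04 x y) = tm cA04 (φ x) (φ y)) ↔
    (∃ ξ ν : ℂ, ξ ≠ 0 ∧ φ (![1,0] : V2) = ξ • (![1,0] : V2) + ν • (![0,1] : V2) ∧
      φ (![0,1] : V2) = (ξ ^ 2) • (![0,1] : V2)) := by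
  constructor
  · intro h
    set ξ := φ (![1,0] : V2) 0 with hξ
    refine ⟨ξ, φ (![1,0] : V2) 1, ?_, ?_, ?_⟩
    · intro h0
      have h1 := h ![1,0] ![1,0]
      rw [tm_cA04, tm_cA04] at h1
      simp [← hξ, h0] at h1
    · exact decomp _
    · have h1 := h ![1,0] ![1,0]
      rw [tm_cA04, tm_cA04] at h1
      simpa [← hξ, sq] using h1
  · rintro ⟨ξ, ν, hξ, h1, h2⟩ x y
    rw [tm_cA04, tm_cA04, map_smul]
    have hx : ∀ z : V2, φ z 0 = z 0 * ξ := by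
      intro z
      conv_lhs => rw [decomp z, map_add, map_smul, map_smul, h1, h2]
      simp
    rw [hx, hx, h2, smul_smul]
    congr 1
    ring

/-- A ℂ-linear bijection `φ` of the algebra `A04` (`e1·e1 = e2`) is an
algebra automorphism iff there are `ξ ≠ 0` and `ν` with `φ(e1) = ξ e1 + ν e2` and
`φ(e2) = ξ² e2`. -/
theorem statement2 (φ : V2 ≃ₗ[ℂ] V2) :
    (∀ x y : V2, φ (tm cA04 x y) = tm cA04 (φ x) (φ y)) ↔
    (∃ ξ ν : ℂ, ξ ≠ 0 ∧ φ (![1,0] : V2) = ξ • (![1,0] : V2) + ν • (![0,1] : V2) ∧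
      φ (![0,1] : V2) = (ξ ^ 2) • (![0,1] : V2)) := by
  exact statement2' φ
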